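/- With the internal tensor ⊗' and internal associator τ := ◁∘(◁⊗1_S)∘α_{S,S,S}∘(1_S⊗▷)∘▷ induced by a self-similar structure (S,◁,▷), τ satisfies MacLane's pentagon condition: (τ ⊗' 1_S) ∘ τ ∘ (1_S ⊗' τ) = τ ∘ τ. -/

import Mathlib

open CategoryTheory MonoidalCategory

/-- The internal associator τ satisfies MacLane's pentagon condition:
(τ ⊗' 1_S) ∘ τ ∘ (1_S ⊗' τ) = τ ∘ τ. -/
theorem stmt13 {C : Type*} [Category C] [MonoidalCategory C] {S : C}
    (c : S ⊗ S ⟶ S) (d : S ⟶ S ⊗ S)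
    (hdc : d ≫ c = 𝟙 S) (hcd : c ≫ d = 𝟙 (S ⊗ S))
    (tp : (S ⟶ S) → (S ⟶ S) → (S ⟶ S))
    (htp : ∀ f g : S ⟶ S, tp f g = d ≫ (f ⊗ₘ g) ≫ c)
    (τ : S ⟶ S)
    (hτ : τ = d ≫ (𝟙 S ⊗ₘ d) ≫ (α_ S S S).inv ≫ (c ⊗ₘ 𝟙 S) ≫ c) :
    tp (𝟙 S) τ ≫ τ ≫ tp τ (𝟙 S) = τ ≫ τ := by
  have hcd' : ∀ {Z : C} (f : S ⊗ S ⟶ Z), c ≫ d ≫ f = f := by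
    intro Z f; rw [← Category.assoc, hcd, Category.id_comp]
  have h1 : ∀ {Z : C} (f : S ⊗ (S ⊗ S) ⟶ Z), S ◁ c ≫ S ◁ d ≫ f = f := by
    intro Z f
    rw [← Category.assoc, ← MonoidalCategory.whiskerLeft_comp, hcd,
      MonoidalCategory.whiskerLeft_id, Category.id_comp]
  have h2 : ∀ {Z : C} (f : (S ⊗ S) ⊗ S ⟶ Z), c ▷ S ≫ d ▷ S ≫ f = f := by
    intro Z f; rw [← Category.assoc, ← comp_whiskerRight, hcd, id_whiskerRight, Category.id_comp]
  have h3 : ∀ {Z : C} (f : S ⊗ ((S ⊗ S) ⊗ S) ⟶ Z), S ◁ c ▷ S ≫ S ◁ d ▷ S ≫ f = f := by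
    intro Z f
    rw [← Category.assoc, ← MonoidalCategory.whiskerLeft_comp, ← comp_whiskerRight, hcd,
      id_whiskerRight, MonoidalCategory.whiskerLeft_id, Category.id_comp]
  rw [htp, htp, hτ]
  simp only [Category.assoc, hcd']
  simp only [MonoidalCategory.tensorHom_def, Category.assoc, MonoidalCategory.id_whiskerLeft,
    MonoidalCategory.whiskerRight_id, MonoidalCategory.whiskerLeft_comp,
    comp_whiskerRight, whisker_exchange_assoc, hcd', h1, h2, h3, Iso.inv_hom_id_assoc,
    Iso.hom_inv_id_assoc, Category.id_comp, Category.comp_id]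
  simp only [MonoidalCategory.whiskerLeft_id, id_whiskerRight, Category.id_comp,
    Category.comp_id]
  simp [h1, h2, h3, pentagon_inv_assoc]
  conv_rhs => rw [← whisker_exchange_assoc, ← associator_inv_naturality_right_assoc,
    associator_inv_naturality_left_assoc]
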